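/- For every even p ≥ 2 and every even n ≥ p+2, there exists a simple graph on n vertices with degree sequence (n−1, p, p, …, p, p−1), having one vertex of degree n−1, n−2 vertices of degree p, and one vertex of degree p−1. -/

import Mathlib

set_option linter.unusedSectionVars false
set_option linter.unnecessarySimpa false

open SimpleGraph Finset

/-- The multiset of vertex degrees of a finite simple graph. -/
def degMS {m : ℕ} (G : SimpleGraph (Fin m)) [DecidableRel G.Adj] : Multiset ℕ :=
  (Finset.univ : Finset (Fin m)).val.map fun v => G.degree v

/-- `G` contains `K_{p,1,1}` (complete tripartite with parts `p,1,1`) as a subgraph: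
there are adjacent vertices `u, v` and `p` further vertices each adjacent to both. -/
def ContainsKp11 {V : Type*} (G : SimpleGraph V) (p : ℕ) : Prop :=
  ∃ u v : V, G.Adj u v ∧ ∃ s : Finset V, s.card = p ∧ u ∉ s ∧ v ∉ s ∧
    ∀ w ∈ s, G.Adj u w ∧ G.Adj v w

namespace Stmt6Aux

variable (m k : ℕ)

/-- The positive circulant offsets. -/
def D : Finset (ZMod m) := (Finset.Icc 2 (k+1)).image (Nat.cast)

/-- The full (symmetric) circulant offset set. -/
def S : Finset (ZMod m) := D m k ∪ (D m k).image (fun x => -x)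

/-- The near-perfect matching relation on `ZMod m`. -/
def M (x y : ZMod m) : Prop :=
  (x.val % 2 = 1 ∧ y.val = x.val + 1) ∨ (y.val % 2 = 1 ∧ x.val = y.val + 1)

instance (x y : ZMod m) : Decidable (M m x y) := by unfold M; infer_instance

lemma M_symm {x y : ZMod m} (h : M m x y) : M m y x := h.symm

lemma M_ne {x y : ZMod m} (h : M m x y) : x ≠ y := by
  rintro rfl
  rcases h with ⟨_, h⟩ | ⟨_, h⟩ <;> omega

/-- Adjacency for the auxiliary graph. -/
def adj (a b : Option (ZMod m)) : Prop :=
  match a, b with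
  | none, none => False
  | none, some _ => True
  | some _, none => True
  | some x, some y => x ≠ y ∧ ((x - y ∈ S m k) ∨ M m x y)

instance : ∀ a b, Decidable (adj m k a b) := fun a b =>
  match a, b with
  | none, none => inferInstanceAs (Decidable False)
  | none, some _ => inferInstanceAs (Decidable True)
  | some _, none => inferInstanceAs (Decidable True)
  | some _, some _ => inferInstanceAs (Decidable (_ ∧ _))

lemma neg_mem_S {s : ZMod m} (h : s ∈ S m k) : -s ∈ S m k := by
  rcases Finset.mem_union.1 h with h | h
  · exact Finset.mem_union.2 (Or.inr (Finset.mem_image.2 ⟨s, h, rfl⟩))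
  · rcases Finset.mem_image.1 h with ⟨d, hd, rfl⟩
    exact Finset.mem_union.2 (Or.inl (by simpa using hd))

/-- The auxiliary graph on `Option (ZMod m)`. -/
def G : SimpleGraph (Option (ZMod m)) where
  Adj := adj m k
  symm := by
    constructor
    rintro (_|x) (_|y) h <;> try trivial
    obtain ⟨hne, h⟩ := h
    refine ⟨hne.symm, ?_⟩
    rcases h with h | h
    · left; have := neg_mem_S m k h; simpa using this
    · right; exact M_symm m h
  loopless := by
    constructor
    rintro (_|x) h
    · exact h
    · exact h.1 rfl

instance : DecidableRel (G m k).Adj := fun a b =>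
  inferInstanceAs (Decidable (adj m k a b))

lemma G_adj_some_some (x y : ZMod m) :
    (G m k).Adj (some x) (some y) ↔ x ≠ y ∧ ((x - y ∈ S m k) ∨ M m x y) := Iff.rfl

lemma G_adj_none_some (x : ZMod m) : (G m k).Adj none (some x) := trivial

lemma G_adj_some_none (x : ZMod m) : (G m k).Adj (some x) none := trivial

lemma G_not_adj_none_none : ¬ (G m k).Adj none none := id

section Main

variable [NeZero m] (hm : 2 * k + 3 ≤ m) (hodd : Odd m)

include hm

lemma cast_mem_zero {d : ℕ} (hd2 : 0 < d) (hdk : d ≤ 2 * k + 2) :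
    (d : ZMod m) ≠ 0 := by
  intro h
  rw [ZMod.natCast_eq_zero_iff] at h
  have := Nat.le_of_dvd hd2 h
  omega

lemma zero_not_mem_S : (0 : ZMod m) ∉ S m k := by
  intro h
  rcases Finset.mem_union.1 h with h | h
  · rcases Finset.mem_image.1 h with ⟨d, hd, hcast⟩
    rw [Finset.mem_Icc] at hd
    exact cast_mem_zero m k hm (by omega) (by omega) hcast
  · rcases Finset.mem_image.1 h with ⟨s, hs, hneg⟩
    rcases Finset.mem_image.1 hs with ⟨d, hd, rfl⟩
    rw [Finset.mem_Icc] at hd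
    refine cast_mem_zero m k hm (d := d) (by omega) (by omega) ?_
    rw [← neg_neg ((d : ZMod m)), hneg, neg_zero]

lemma one_not_mem_S : (1 : ZMod m) ∉ S m k := by
  intro h
  rcases Finset.mem_union.1 h with h | h
  · rcases Finset.mem_image.1 h with ⟨d, hd, hcast⟩
    rw [Finset.mem_Icc] at hd
    refine cast_mem_zero m k hm (d := d - 1) (by omega) (by omega) ?_
    have : ((d : ℕ) : ZMod m) - 1 = 0 := by rw [hcast]; ring
    rw [← this]
    push_cast [Nat.cast_sub (by omega : 1 ≤ d)]
    ring
  · rcases Finset.mem_image.1 h with ⟨s, hs, hneg⟩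
    rcases Finset.mem_image.1 hs with ⟨d, hd, rfl⟩
    rw [Finset.mem_Icc] at hd
    refine cast_mem_zero m k hm (d := d + 1) (by omega) (by omega) ?_
    push_cast
    rw [← hneg]; ring

lemma neg_one_not_mem_S : (-1 : ZMod m) ∉ S m k := by
  intro h
  have := neg_mem_S m k h
  rw [neg_neg] at this
  exact one_not_mem_S m k hm this

lemma card_S : (S m k).card = 2 * k := by
  have hinj : Set.InjOn (Nat.cast : ℕ → ZMod m) (Finset.Icc 2 (k+1)) := by
    intro a ha b hb hab
    rw [Finset.coe_Icc, Set.mem_Icc] at ha hb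
    have ha' : ((a : ℕ) : ZMod m).val = a := ZMod.val_cast_of_lt (by omega)
    have hb' : ((b : ℕ) : ZMod m).val = b := ZMod.val_cast_of_lt (by omega)
    rw [← ha', ← hb', hab]
  have hD : (D m k).card = k := by
    rw [D, Finset.card_image_of_injOn hinj, Nat.card_Icc]
    omega
  have hD' : ((D m k).image (fun x => -x)).card = k := by
    rw [Finset.card_image_of_injective _ neg_injective, hD]
  have hdisj : Disjoint (D m k) ((D m k).image (fun x => -x)) := by
    rw [Finset.disjoint_left]
    intro a ha ha'
    rcases Finset.mem_image.1 ha with ⟨d, hd, rfl⟩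
    rcases Finset.mem_image.1 ha' with ⟨s, hs, hneg⟩
    rcases Finset.mem_image.1 hs with ⟨e, he, rfl⟩
    rw [Finset.mem_Icc] at hd he
    refine cast_mem_zero m k hm (d := d + e) (by omega) (by omega) ?_
    push_cast
    rw [← hneg]; ring
  rw [S, Finset.card_union_of_disjoint hdisj, hD, hD']
  omega

include hodd

lemma Mset_zero : (univ.filter (fun y => M m 0 y)) = (∅ : Finset (ZMod m)) := by
  ext y
  simp only [Finset.mem_filter, Finset.mem_univ, true_and, Finset.notMem_empty, iff_false]
  rintro (⟨h1, _⟩ | ⟨_, h2⟩)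
  · rw [ZMod.val_zero] at h1; omega
  · rw [ZMod.val_zero] at h2; omega

lemma Mset_ne_zero {x : ZMod m} (hx : x ≠ 0) :
    (univ.filter (fun y => M m x y)).card = 1 := by
  have hxval : x.val < m := ZMod.val_lt x
  have hxne : x.val ≠ 0 := fun h => hx (by rwa [ZMod.val_eq_zero] at h)
  obtain ⟨t, ht⟩ := hodd
  rcases Nat.even_or_odd x.val with hev | hod
  · -- x.val even, partner has val x.val - 1
    obtain ⟨s, hs⟩ := hev
    set y0 : ZMod m := ((x.val - 1 : ℕ) : ZMod m) with hy0
    have hy0v : y0.val = x.val - 1 := ZMod.val_cast_of_lt (by omega)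
    have : (univ.filter (fun y => M m x y)) = {y0} := by
      ext y
      simp only [Finset.mem_filter, Finset.mem_univ, true_and, Finset.mem_singleton]
      constructor
      · rintro (⟨h1, _⟩ | ⟨_, h2⟩)
        · omega
        · apply ZMod.val_injective
          omega
      · rintro rfl
        right
        constructor <;> omega
    rw [this, Finset.card_singleton]
  · -- x.val odd, partner has val x.val + 1
    obtain ⟨s, hs⟩ := hod
    have hxm : x.val ≠ m - 1 := by omega
    set y0 : ZMod m := ((x.val + 1 : ℕ) : ZMod m) with hy0
    have hy0v : y0.val = x.val + 1 := ZMod.val_cast_of_lt (by omega)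
    have : (univ.filter (fun y => M m x y)) = {y0} := by
      ext y
      simp only [Finset.mem_filter, Finset.mem_univ, true_and, Finset.mem_singleton]
      constructor
      · rintro (⟨_, h1⟩ | ⟨h2, h3⟩)
        · apply ZMod.val_injective
          omega
        · omega
      · rintro rfl
        left
        constructor <;> omega
    rw [this, Finset.card_singleton]

lemma M_shift {x y : ZMod m} (h : M m x y) : y = x + 1 ∨ y = x - 1 := by
  rcases h with ⟨_, h1⟩ | ⟨_, h2⟩
  · left
    have : ((y.val : ℕ) : ZMod m) = ((x.val + 1 : ℕ) : ZMod m) := by rw [h1]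
    rw [ZMod.natCast_zmod_val] at this
    rw [this]
    push_cast
    rw [ZMod.natCast_zmod_val]
  · right
    have : ((x.val : ℕ) : ZMod m) = ((y.val + 1 : ℕ) : ZMod m) := by rw [h2]
    rw [ZMod.natCast_zmod_val] at this
    push_cast at this
    rw [ZMod.natCast_zmod_val] at this
    rw [this]; ring

lemma nf_some (x : ZMod m) :
    (G m k).neighborFinset (some x) =
      insert none ((((S m k).image (fun d => x - d)) ∪
        (univ.filter (fun y => M m x y))).image some) := by
  ext b
  cases b with
  | none => simp [mem_neighborFinset, G_adj_some_none]
  | some y =>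
    rw [mem_neighborFinset, G_adj_some_some]
    simp only [Finset.mem_insert, reduceCtorEq, Finset.mem_image, Finset.mem_union,
      Finset.mem_filter, Finset.mem_univ, true_and, false_or,
      Option.some.injEq]
    constructor
    · rintro ⟨hne, h | h⟩
      · exact ⟨y, Or.inl ⟨x - y, h, by ring⟩, rfl⟩
      · exact ⟨y, Or.inr h, rfl⟩
    · rintro ⟨z, hz, rfl⟩
      rcases hz with ⟨d, hd, rfl⟩ | hM
      · refine ⟨?_, Or.inl (by simpa using hd)⟩
        intro h
        have : d = 0 := by linear_combination h
        rw [this] at hd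
        exact zero_not_mem_S m k hm hd
      · exact ⟨M_ne m hM, Or.inr hM⟩

lemma disj_SM (x : ZMod m) :
    Disjoint ((S m k).image (fun d => x - d)) (univ.filter (fun y => M m x y)) := by
  rw [Finset.disjoint_left]
  rintro y hy hM
  rcases Finset.mem_image.1 hy with ⟨d, hd, rfl⟩
  rcases Finset.mem_filter.1 hM with ⟨_, hM⟩
  rcases M_shift m k hm hodd hM with h | h
  · have : d = -1 := by linear_combination -h
    rw [this] at hd
    exact neg_one_not_mem_S m k hm hd
  · have : d = 1 := by linear_combination -h
    rw [this] at hd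
    exact one_not_mem_S m k hm hd

lemma deg_some (x : ZMod m) :
    (G m k).degree (some x) = 2 * k + 1 + (univ.filter (fun y => M m x y)).card := by
  rw [← card_neighborFinset_eq_degree, nf_some m k hm hodd]
  rw [Finset.card_insert_of_notMem (by simp)]
  rw [Finset.card_image_of_injective _ (Option.some_injective _)]
  rw [Finset.card_union_of_disjoint (disj_SM m k hm hodd x)]
  rw [Finset.card_image_of_injective _ (sub_right_injective), card_S m k hm]
  omega

lemma deg_some_zero : (G m k).degree (some 0) = 2 * k + 1 := by
  rw [deg_some m k hm hodd, Mset_zero m k hm hodd]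
  simp

lemma deg_some_ne {x : ZMod m} (hx : x ≠ 0) :
    (G m k).degree (some x) = 2 * k + 2 := by
  rw [deg_some m k hm hodd, Mset_ne_zero m k hm hodd hx]

lemma deg_none : (G m k).degree none = m := by
  have : (G m k).neighborFinset none = univ.image some := by
    ext b
    cases b with
    | none => simp [mem_neighborFinset, G_not_adj_none_none]
    | some y => simp [mem_neighborFinset, G_adj_none_some]
  rw [← card_neighborFinset_eq_degree, this,
    Finset.card_image_of_injective _ (Option.some_injective _), Finset.card_univ, ZMod.card]

lemma main_ms :
    ((univ : Finset (Option (ZMod m))).val.map (fun v => (G m k).degree v)) =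
      m ::ₘ (2 * k + 1) ::ₘ Multiset.replicate (m - 1) (2 * k + 2) := by
  set U := (univ : Finset (Option (ZMod m))).val with hU
  have hnodup : U.Nodup := (univ : Finset (Option (ZMod m))).nodup
  have hnone : (none : Option (ZMod m)) ∈ U := Finset.mem_univ _
  have h1 : U = none ::ₘ U.erase none := (Multiset.cons_erase hnone).symm
  have hz : (some (0 : ZMod m)) ∈ U.erase none := by
    rw [hnodup.mem_erase_iff]
    exact ⟨by simp, Finset.mem_univ _⟩
  have h2 : U.erase none = some 0 ::ₘ (U.erase none).erase (some 0) :=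
    (Multiset.cons_erase hz).symm
  have hcard : Multiset.card U = m + 1 := by
    rw [hU, ← Finset.card_def, Finset.card_univ, Fintype.card_option, ZMod.card]
  have hcard2 : Multiset.card ((U.erase none).erase (some 0)) = m - 1 := by
    rw [Multiset.card_erase_of_mem hz, Multiset.card_erase_of_mem hnone, hcard]
    rfl
  rw [h1, h2, Multiset.map_cons, Multiset.map_cons, deg_none m k hm hodd,
    deg_some_zero m k hm hodd]
  congr 1
  congr 1
  rw [Multiset.eq_replicate]
  constructor
  · rw [Multiset.card_map, hcard2]
  · intro b hb
    rcases Multiset.mem_map.1 hb with ⟨v, hv, rfl⟩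
    have hv2 := ((hnodup.erase _).mem_erase_iff).1 hv
    have hv3 := (hnodup.mem_erase_iff).1 hv2.2
    have hvz := hv2.1
    have hvn := hv3.1
    cases v with
    | none => exact absurd rfl hvn
    | some x =>
      have hx : x ≠ 0 := fun h => hvz (by rw [h])
      exact deg_some_ne m k hm hodd hx

end Main

end Stmt6Aux

open Stmt6Aux in
theorem stmt_6 (p n : ℕ) (hpeven : Even p) (hp : 2 ≤ p) (hneven : Even n) (hn : p + 2 ≤ n) :
    ∃ (H : SimpleGraph (Fin n)) (_ : DecidableRel H.Adj),
      degMS H = (n - 1) ::ₘ (p - 1) ::ₘ Multiset.replicate (n - 2) p := by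
  obtain ⟨m, rfl⟩ : ∃ m, n = m + 1 := ⟨n - 1, by omega⟩
  obtain ⟨t, ht⟩ := hpeven
  obtain ⟨k, hk⟩ : ∃ k, p = 2 * k + 2 := ⟨t - 1, by omega⟩
  have hm : 2 * k + 3 ≤ m := by omega
  have hodd : Odd m := by
    obtain ⟨u, hu⟩ := hneven
    exact ⟨u - 1, by omega⟩
  haveI : NeZero m := ⟨by omega⟩
  have e : Fin (m + 1) ≃ Option (ZMod m) :=
    Fintype.equivOfCardEq (by simp [ZMod.card])
  refine ⟨(G m k).comap ⇑e, fun a b => inferInstanceAs (Decidable (adj m k (e a) (e b))), ?_⟩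
  have hdeg : ∀ v, ((G m k).comap ⇑e).degree v = (G m k).degree (e v) := by
    intro v
    rw [← card_neighborFinset_eq_degree, ← card_neighborFinset_eq_degree,
      neighborFinset_eq_filter, neighborFinset_eq_filter]
    apply Finset.card_bij (fun w _ => e w)
    · intro a ha
      simp only [Finset.mem_filter, Finset.mem_univ, true_and, comap_adj] at *
      exact ha
    · intro a _ b _ h
      exact e.injective h
    · intro b hb
      refine ⟨e.symm b, ?_, by simp⟩
      simp only [Finset.mem_filter, Finset.mem_univ, true_and, comap_adj,
        Equiv.apply_symm_apply] at *
      exact hb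
  have : degMS ((G m k).comap ⇑e) =
      ((univ : Finset (Option (ZMod m))).val.map (fun v => (G m k).degree v)) := by
    rw [degMS]
    rw [show ((univ : Finset (Fin (m+1))).val.map fun v => ((G m k).comap ⇑e).degree v) =
        ((univ : Finset (Fin (m+1))).val.map fun v => (G m k).degree (e v)) from
      Multiset.map_congr rfl (fun v _ => hdeg v)]
    have huniv : (univ : Finset (Fin (m+1))).val.map ⇑e =
        (univ : Finset (Option (ZMod m))).val := by
      simpa using congrArg Finset.val (Finset.map_univ_equiv e)
    rw [← huniv, Multiset.map_map]
    rfl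
  refine this.trans ?_
  rw [main_ms m k hm hodd,
    show m + 1 - 1 = m by omega, show p - 1 = 2 * k + 1 by omega,
    show m + 1 - 2 = m - 1 by omega, show p = 2 * k + 2 from hk]
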